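/- Let λ₁, κ₁, λ₂, κ₂ ∈ 𝔽_q((T^{-1})) with Δ := |λ₁κ₂ − λ₂κ₁| > 0, and set L_j(Q) := λ_j Q₁ + κ_j Q₂ for Q = (Q₁,Q₂) and j = 1,2. Then for all ρ₁, ρ₂ ∈ 𝔽_q((T^{-1})) there exists Q ∈ 𝔽_q[T]² such that |L₁(Q) + ρ₁|·|L₂(Q) + ρ₂| ≤ q^{-2}·Δ. -/

import Mathlib

open Polynomial Filter
open scoped Classical ENNReal

noncomputable section

variable (Fq : Type) [Field Fq] [Fintype Fq]

/-- The element `T` inside the Laurent-series field `𝔽_q((T⁻¹))`, which we realize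
as the field of Hahn/Laurent series in the variable `T⁻¹`. -/
def Tel : LaurentSeries Fq := HahnSeries.single (-1 : ℤ) 1

/-- The inverse variable `T⁻¹` itself. -/
def TinvEl : LaurentSeries Fq := HahnSeries.single (1 : ℤ) 1

/-- The embedding of the polynomial ring `𝔽_q[T]` into `𝔽_q((T⁻¹))`,
sending `T` to `Tel`. -/
def polyToL (P : Polynomial Fq) : LaurentSeries Fq :=
  Polynomial.eval₂ HahnSeries.C (Tel Fq) P

/-- The absolute value `|x| = q ^ (deg x)` on `𝔽_q((T⁻¹))`, with `|0| = 0`.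
Here the degree of `x ≠ 0` is minus the order of `x` as a series in `T⁻¹`. -/
def labs (x : LaurentSeries Fq) : ℝ :=
  if x = 0 then 0 else (Fintype.card Fq : ℝ) ^ (-x.order)

/-- `‖x‖`: the distance from `x` to the nearest polynomial. -/
def lnorm (x : LaurentSeries Fq) : ℝ :=
  ⨅ P : Polynomial Fq, labs Fq (x - polyToL Fq P)

/-- `x ∈ 𝔽_q(T)`, i.e. `x` is rational. -/
def IsRat (x : LaurentSeries Fq) : Prop :=
  ∃ P Q : Polynomial Fq, Q ≠ 0 ∧ polyToL Fq Q * x = polyToL Fq P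

variable {Fq}

section MinkowskiAux

set_option linter.unusedSectionVars false
set_option linter.unusedVariables false

lemma one_lt_q : (1:ℝ) < (Fintype.card Fq : ℝ) := by exact_mod_cast Fintype.one_lt_card

lemma q_pos : (0:ℝ) < (Fintype.card Fq : ℝ) := lt_trans one_pos one_lt_q

lemma labs_nonneg (x : LaurentSeries Fq) : 0 ≤ labs Fq x := by
  unfold labs; split
  · exact le_refl 0
  · have := q_pos (Fq := Fq); positivity

lemma labs_zero : labs Fq 0 = 0 := if_pos rfl

lemma labs_of_ne {x : LaurentSeries Fq} (hx : x ≠ 0) :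
    labs Fq x = (Fintype.card Fq : ℝ) ^ (-x.order) := if_neg hx

lemma labs_pos {x : LaurentSeries Fq} (hx : x ≠ 0) : 0 < labs Fq x := by
  rw [labs_of_ne hx]
  have := q_pos (Fq := Fq); positivity

lemma labs_eq_zero {x : LaurentSeries Fq} (h : labs Fq x = 0) : x = 0 := by
  by_contra hx
  exact absurd h (ne_of_gt (labs_pos hx))

lemma labs_mul (x y : LaurentSeries Fq) : labs Fq (x * y) = labs Fq x * labs Fq y := by
  by_cases hx : x = 0
  · simp [hx, labs_zero]
  by_cases hy : y = 0
  · simp [hy, labs_zero]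
  rw [labs_of_ne hx, labs_of_ne hy, labs_of_ne (mul_ne_zero hx hy),
    HahnSeries.order_mul hx hy, neg_add, zpow_add₀ (ne_of_gt (q_pos (Fq := Fq)))]

lemma labs_neg (x : LaurentSeries Fq) : labs Fq (-x) = labs Fq x := by
  by_cases hx : x = 0
  · simp [hx]
  rw [labs_of_ne hx, labs_of_ne (neg_ne_zero.mpr hx), HahnSeries.order_neg]

lemma labs_le_zpow {x : LaurentSeries Fq} {n : ℤ} (h : x = 0 ∨ n ≤ x.order) :
    labs Fq x ≤ (Fintype.card Fq : ℝ) ^ (-n) := by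
  have hq := q_pos (Fq := Fq)
  rcases h with h | h
  · rw [h, labs_zero]; positivity
  by_cases hx : x = 0
  · rw [hx, labs_zero]; positivity
  rw [labs_of_ne hx]
  exact zpow_le_zpow_right₀ (one_lt_q (Fq := Fq)).le (by omega)

lemma labs_le_labs {x y : LaurentSeries Fq} (hy : y ≠ 0) (h : y.order ≤ x.order) :
    labs Fq x ≤ labs Fq y := by
  by_cases hx : x = 0
  · rw [hx, labs_zero]; exact (labs_pos hy).le
  rw [labs_of_ne hx, labs_of_ne hy]
  exact zpow_le_zpow_right₀ (one_lt_q (Fq := Fq)).le (by omega)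

lemma labs_add_le (x y : LaurentSeries Fq) :
    labs Fq (x + y) ≤ max (labs Fq x) (labs Fq y) := by
  by_cases hxy : x + y = 0
  · rw [hxy, labs_zero]; exact le_max_of_le_left (labs_nonneg x)
  by_cases hx : x = 0
  · simp [hx]
  by_cases hy : y = 0
  · simp [hy]
  have h := HahnSeries.min_order_le_order_add hxy
  rcases le_total x.order y.order with hle | hle
  · rw [min_eq_left hle] at h
    exact le_max_of_le_left (labs_le_labs hx h)
  · rw [min_eq_right hle] at h
    exact le_max_of_le_right (labs_le_labs hy h)

lemma polyToL_CX (a : Fq) (i : ℕ) :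
    polyToL Fq (Polynomial.C a * Polynomial.X ^ i) = HahnSeries.single (-(i:ℤ)) a := by
  unfold polyToL
  rw [Polynomial.eval₂_mul, Polynomial.eval₂_C, Polynomial.eval₂_X_pow]
  unfold Tel
  rw [HahnSeries.single_pow]
  have : HahnSeries.C a = HahnSeries.single (0:ℤ) a := rfl
  rw [this, HahnSeries.single_mul_single]
  simp

lemma polyToL_sub (a b : Polynomial Fq) :
    polyToL Fq (a - b) = polyToL Fq a - polyToL Fq b := by
  unfold polyToL
  rw [Polynomial.eval₂_sub]

lemma polyToL_mul (a b : Polynomial Fq) :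
    polyToL Fq (a * b) = polyToL Fq a * polyToL Fq b := by
  unfold polyToL
  rw [Polynomial.eval₂_mul]

lemma le_order_of {x : LaurentSeries Fq} (hx : x ≠ 0) {n : ℤ}
    (h : ∀ m < n, x.coeff m = 0) : n ≤ x.order := by
  by_contra hc
  exact hx (HahnSeries.coeff_order_eq_zero.mp (h _ (by omega)))

lemma exists_round (x : LaurentSeries Fq) :
    ∃ P : Polynomial Fq, x - polyToL Fq P = 0 ∨ 1 ≤ (x - polyToL Fq P).order := by
  set M : ℕ := x.order.natAbs + 1 with hM
  have hMlt : -(M:ℤ) < x.order := by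
    omega
  refine ⟨∑ i ∈ Finset.range M, Polynomial.C (x.coeff (-(i:ℤ))) * Polynomial.X ^ i, ?_⟩
  set P := ∑ i ∈ Finset.range M, Polynomial.C (x.coeff (-(i:ℤ))) * Polynomial.X ^ i with hP
  have hcoeff : ∀ n : ℤ, (polyToL Fq P).coeff n
      = ∑ i ∈ Finset.range M, (HahnSeries.single (-(i:ℤ)) (x.coeff (-(i:ℤ)))).coeff n := by
    intro n
    rw [hP]
    have : polyToL Fq (∑ i ∈ Finset.range M, Polynomial.C (x.coeff (-(i:ℤ))) * Polynomial.X ^ i)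
        = ∑ i ∈ Finset.range M, HahnSeries.single (-(i:ℤ)) (x.coeff (-(i:ℤ))) := by
      unfold polyToL
      rw [Polynomial.eval₂_finset_sum]
      exact Finset.sum_congr rfl fun i _ => polyToL_CX _ _
    rw [this]
    exact map_sum (HahnSeries.coeff.addMonoidHom n) _ _
  by_cases h0 : x - polyToL Fq P = 0
  · exact Or.inl h0
  refine Or.inr (le_order_of h0 ?_)
  intro m hm
  rw [HahnSeries.coeff_sub, hcoeff]
  by_cases hcase : -(M:ℤ) < m
  · have hmle : m ≤ 0 := by omega
    rw [Finset.sum_eq_single ((-m).toNat)]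
    · have hmm : -((-m).toNat : ℤ) = m := by omega
      rw [hmm, HahnSeries.coeff_single_same, sub_self]
    · intro i _ hne
      rw [HahnSeries.coeff_single_of_ne]
      omega
    · intro hnotmem
      exfalso
      apply hnotmem
      rw [Finset.mem_range]
      omega
  · have h1 : x.coeff m = 0 := HahnSeries.coeff_eq_zero_of_lt_order (by omega)
    rw [h1, Finset.sum_eq_zero, sub_zero]
    intro i hi
    rw [HahnSeries.coeff_single_of_ne]
    simp only [Finset.mem_range] at hi
    omega

lemma round_labs (x : LaurentSeries Fq) :
    ∃ P : Polynomial Fq, labs Fq (x - polyToL Fq P) ≤ ((Fintype.card Fq : ℝ))⁻¹ := by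
  obtain ⟨P, hP⟩ := exists_round x
  refine ⟨P, ?_⟩
  have := labs_le_zpow (n := 1) hP
  rwa [zpow_neg_one] at this

lemma order_add_eq_min_aux {x y : LaurentSeries Fq} (hx : x ≠ 0) (hy : y ≠ 0)
    (h : x.order < y.order) : x + y ≠ 0 ∧ (x + y).order = x.order := by
  have hot : x.orderTop < y.orderTop := by
    rw [← HahnSeries.order_eq_orderTop_of_ne_zero hx, ← HahnSeries.order_eq_orderTop_of_ne_zero hy]
    exact_mod_cast h
  have h2 := HahnSeries.orderTop_add_eq_left hot
  have hxy : x + y ≠ 0 := by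
    intro h0
    rw [h0, HahnSeries.orderTop_zero] at h2
    exact hx (HahnSeries.orderTop_eq_top.mp h2.symm)
  rw [← HahnSeries.order_eq_orderTop_of_ne_zero hxy, ← HahnSeries.order_eq_orderTop_of_ne_zero hx] at h2
  exact ⟨hxy, by exact_mod_cast h2⟩

lemma order_sub_eq_min {x y : LaurentSeries Fq} (hx : x ≠ 0) (hy : y ≠ 0)
    (hne : x.order ≠ y.order) : (x - y).order = min x.order y.order := by
  have hy' : -y ≠ 0 := neg_ne_zero.mpr hy
  rcases hne.lt_or_gt with h | h
  · have := order_add_eq_min_aux hx hy' (by rwa [HahnSeries.order_neg])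
    rw [sub_eq_add_neg, this.2, min_eq_left h.le]
  · have := order_add_eq_min_aux hy' hx (by rwa [HahnSeries.order_neg])
    rw [sub_eq_add_neg, add_comm, this.2, HahnSeries.order_neg, min_eq_right h.le]

lemma mul_inv_sq (a b c : ℝ) : (a * c⁻¹) * (b * c⁻¹) = a * b / c ^ 2 := by
  rw [div_eq_mul_inv, sq, mul_inv]; ring

lemma mul_inv_inv (a c : ℝ) : (a * c⁻¹) * c⁻¹ = a / c ^ 2 := by
  rw [div_eq_mul_inv, sq, mul_inv]; ring

lemma lemE (lam1 kap1 lam2 kap2 ρ1 ρ2 : LaurentSeries Fq)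
    (hd : lam1 * kap2 - lam2 * kap1 ≠ 0)
    (hk : labs Fq kap1 * labs Fq kap2 ≤ labs Fq (lam1 * kap2 - lam2 * kap1)) :
    ∃ Q1 Q2 : Polynomial Fq,
      labs Fq (lam1 * polyToL Fq Q1 + kap1 * polyToL Fq Q2 + ρ1) *
        labs Fq (lam2 * polyToL Fq Q1 + kap2 * polyToL Fq Q2 + ρ2) ≤
        labs Fq (lam1 * kap2 - lam2 * kap1) / (Fintype.card Fq : ℝ) ^ 2 := by
  have hq0 : (0:ℝ) < (Fintype.card Fq : ℝ) := q_pos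
  have hqi : (0:ℝ) ≤ ((Fintype.card Fq : ℝ))⁻¹ := by positivity
  by_cases hk2 : kap2 = 0
  · -- triangular case
    have hl2 : lam2 ≠ 0 := by
      intro h; apply hd; rw [hk2, h]; ring
    have hk1 : kap1 ≠ 0 := by
      intro h; apply hd; rw [hk2, h]; ring
    obtain ⟨Q1, h1⟩ := round_labs (-ρ2 / lam2)
    obtain ⟨Q2, h2⟩ := round_labs (-(ρ1 + lam1 * polyToL Fq Q1) / kap1)
    refine ⟨Q1, Q2, ?_⟩
    set q1 := polyToL Fq Q1
    set q2 := polyToL Fq Q2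
    have e2 : lam2 * q1 + kap2 * q2 + ρ2 = -(lam2 * (-ρ2 / lam2 - q1)) := by
      rw [hk2]; field_simp
      try ring
    have e1 : lam1 * q1 + kap1 * q2 + ρ1
        = -(kap1 * (-(ρ1 + lam1 * q1) / kap1 - q2)) := by
      field_simp
      try ring
    have b2 : labs Fq (lam2 * q1 + kap2 * q2 + ρ2)
        ≤ labs Fq lam2 * ((Fintype.card Fq : ℝ))⁻¹ := by
      rw [e2, labs_neg, labs_mul]
      exact mul_le_mul_of_nonneg_left h1 (labs_nonneg _)
    have b1 : labs Fq (lam1 * q1 + kap1 * q2 + ρ1)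
        ≤ labs Fq kap1 * ((Fintype.card Fq : ℝ))⁻¹ := by
      rw [e1, labs_neg, labs_mul]
      exact mul_le_mul_of_nonneg_left h2 (labs_nonneg _)
    have hdd : labs Fq (lam1 * kap2 - lam2 * kap1) = labs Fq kap1 * labs Fq lam2 := by
      rw [hk2]
      have : lam1 * 0 - lam2 * kap1 = -(kap1 * lam2) := by ring
      rw [this, labs_neg, labs_mul]
    calc labs Fq (lam1 * q1 + kap1 * q2 + ρ1) * labs Fq (lam2 * q1 + kap2 * q2 + ρ2)
        ≤ (labs Fq kap1 * ((Fintype.card Fq : ℝ))⁻¹) * (labs Fq lam2 * ((Fintype.card Fq : ℝ))⁻¹) :=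
          mul_le_mul b1 b2 (labs_nonneg _) (mul_nonneg (labs_nonneg _) hqi)
      _ = labs Fq (lam1 * kap2 - lam2 * kap1) / (Fintype.card Fq : ℝ) ^ 2 := by
          rw [mul_inv_sq, hdd]
  · -- main case
    set d := lam1 * kap2 - lam2 * kap1 with hd_def
    obtain ⟨Q1, h1⟩ := round_labs (-(kap2 * ρ1 - kap1 * ρ2) / d)
    obtain ⟨Q2, h2⟩ := round_labs (-(ρ2 + lam2 * polyToL Fq Q1) / kap2)
    refine ⟨Q1, Q2, ?_⟩
    set q1 := polyToL Fq Q1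
    set q2 := polyToL Fq Q2
    set θ := -(ρ2 + lam2 * q1) / kap2 - q2 with hθ
    set w1 := -(kap2 * ρ1 - kap1 * ρ2) / d - q1 with hw1
    have e2 : lam2 * q1 + kap2 * q2 + ρ2 = -(kap2 * θ) := by
      rw [hθ]; field_simp
      try ring
    have e1 : kap2 * (lam1 * q1 + kap1 * q2 + ρ1) = -(d * w1) + -(kap2 * (kap1 * θ)) := by
      rw [hθ, hw1]; field_simp; rw [hd_def]
      try ring
    have b2 : labs Fq (lam2 * q1 + kap2 * q2 + ρ2)
        ≤ labs Fq kap2 * ((Fintype.card Fq : ℝ))⁻¹ := by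
      rw [e2, labs_neg, labs_mul]
      exact mul_le_mul_of_nonneg_left h2 (labs_nonneg _)
    have A : labs Fq kap2 * labs Fq (lam1 * q1 + kap1 * q2 + ρ1)
        ≤ labs Fq d * ((Fintype.card Fq : ℝ))⁻¹ := by
      rw [← labs_mul, e1]
      refine (labs_add_le _ _).trans (max_le ?_ ?_)
      · rw [labs_neg, labs_mul]
        exact mul_le_mul_of_nonneg_left h1 (labs_nonneg _)
      · rw [labs_neg, labs_mul, labs_mul]
        calc labs Fq kap2 * (labs Fq kap1 * labs Fq θ)
            = (labs Fq kap1 * labs Fq kap2) * labs Fq θ := by ring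
          _ ≤ labs Fq d * ((Fintype.card Fq : ℝ))⁻¹ :=
              mul_le_mul hk h2 (labs_nonneg _) (labs_nonneg _)
    calc labs Fq (lam1 * q1 + kap1 * q2 + ρ1) * labs Fq (lam2 * q1 + kap2 * q2 + ρ2)
        ≤ labs Fq (lam1 * q1 + kap1 * q2 + ρ1) * (labs Fq kap2 * ((Fintype.card Fq : ℝ))⁻¹) :=
          mul_le_mul_of_nonneg_left b2 (labs_nonneg _)
      _ = (labs Fq kap2 * labs Fq (lam1 * q1 + kap1 * q2 + ρ1)) * ((Fintype.card Fq : ℝ))⁻¹ := by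
          ring
      _ ≤ (labs Fq d * ((Fintype.card Fq : ℝ))⁻¹) * ((Fintype.card Fq : ℝ))⁻¹ :=
          mul_le_mul_of_nonneg_right A hqi
      _ = labs Fq d / (Fintype.card Fq : ℝ) ^ 2 := mul_inv_inv _ _

set_option maxHeartbeats 3000000 in
lemma main_induction : ∀ n : ℕ, ∀ lam1 kap1 lam2 kap2 ρ1 ρ2 : LaurentSeries Fq,
    lam1 * kap2 - lam2 * kap1 ≠ 0 →
    (min (-(lam1.order + lam2.order)) (-(kap1.order + kap2.order))
        + (lam1 * kap2 - lam2 * kap1).order).toNat ≤ n →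
    ∃ Q1 Q2 : Polynomial Fq,
      labs Fq (lam1 * polyToL Fq Q1 + kap1 * polyToL Fq Q2 + ρ1) *
        labs Fq (lam2 * polyToL Fq Q1 + kap2 * polyToL Fq Q2 + ρ2) ≤
        labs Fq (lam1 * kap2 - lam2 * kap1) / (Fintype.card Fq : ℝ) ^ 2 := by
  intro n
  induction n with
  | zero =>
    intro lam1 kap1 lam2 kap2 ρ1 ρ2 hd hm
    by_cases hk : labs Fq kap1 * labs Fq kap2 ≤ labs Fq (lam1 * kap2 - lam2 * kap1)
    · exact lemE _ _ _ _ _ _ hd hk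
    by_cases hl : labs Fq lam1 * labs Fq lam2 ≤ labs Fq (lam1 * kap2 - lam2 * kap1)
    · -- symmetric elimination via column swap
      have hd' : kap1 * lam2 - kap2 * lam1 ≠ 0 := by
        intro h; apply hd; linear_combination -h
      have hlabs : labs Fq (kap1 * lam2 - kap2 * lam1) = labs Fq (lam1 * kap2 - lam2 * kap1) := by
        rw [show kap1 * lam2 - kap2 * lam1 = -(lam1 * kap2 - lam2 * kap1) by ring, labs_neg]
      obtain ⟨Q1, Q2, h⟩ := lemE kap1 lam1 kap2 lam2 ρ1 ρ2 hd' (by rw [hlabs]; exact hl)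
      refine ⟨Q2, Q1, ?_⟩
      rw [show lam1 * polyToL Fq Q2 + kap1 * polyToL Fq Q1 + ρ1
            = kap1 * polyToL Fq Q1 + lam1 * polyToL Fq Q2 + ρ1 by ring,
          show lam2 * polyToL Fq Q2 + kap2 * polyToL Fq Q1 + ρ2
            = kap2 * polyToL Fq Q1 + lam2 * polyToL Fq Q2 + ρ2 by ring,
          ← hlabs]
      exact h
    · -- impossible at measure 0
      exfalso
      have hk1 : kap1 ≠ 0 := fun h => hk (by rw [h, labs_zero, zero_mul]; exact labs_nonneg _)
      have hk2 : kap2 ≠ 0 := fun h => hk (by rw [h, labs_zero, mul_zero]; exact labs_nonneg _)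
      have hl1 : lam1 ≠ 0 := fun h => hl (by rw [h, labs_zero, zero_mul]; exact labs_nonneg _)
      have hl2 : lam2 ≠ 0 := fun h => hl (by rw [h, labs_zero, mul_zero]; exact labs_nonneg _)
      have hoK : kap1.order + kap2.order < (lam1 * kap2 - lam2 * kap1).order := by
        by_contra hcon
        push_neg at hcon
        exact hk (by rw [← labs_mul]
                     exact labs_le_labs hd (by rwa [HahnSeries.order_mul hk1 hk2]))
      have hoL : lam1.order + lam2.order < (lam1 * kap2 - lam2 * kap1).order := by
        by_contra hcon
        push_neg at hcon
        exact hl (by rw [← labs_mul]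
                     exact labs_le_labs hd (by rwa [HahnSeries.order_mul hl1 hl2]))
      omega
  | succ n ih =>
    intro lam1 kap1 lam2 kap2 ρ1 ρ2 hd hm
    by_cases hk : labs Fq kap1 * labs Fq kap2 ≤ labs Fq (lam1 * kap2 - lam2 * kap1)
    · exact lemE _ _ _ _ _ _ hd hk
    by_cases hl : labs Fq lam1 * labs Fq lam2 ≤ labs Fq (lam1 * kap2 - lam2 * kap1)
    · have hd' : kap1 * lam2 - kap2 * lam1 ≠ 0 := by
        intro h; apply hd; linear_combination -h
      have hlabs : labs Fq (kap1 * lam2 - kap2 * lam1) = labs Fq (lam1 * kap2 - lam2 * kap1) := by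
        rw [show kap1 * lam2 - kap2 * lam1 = -(lam1 * kap2 - lam2 * kap1) by ring, labs_neg]
      obtain ⟨Q1, Q2, h⟩ := lemE kap1 lam1 kap2 lam2 ρ1 ρ2 hd' (by rw [hlabs]; exact hl)
      refine ⟨Q2, Q1, ?_⟩
      rw [show lam1 * polyToL Fq Q2 + kap1 * polyToL Fq Q1 + ρ1
            = kap1 * polyToL Fq Q1 + lam1 * polyToL Fq Q2 + ρ1 by ring,
          show lam2 * polyToL Fq Q2 + kap2 * polyToL Fq Q1 + ρ2
            = kap2 * polyToL Fq Q1 + lam2 * polyToL Fq Q2 + ρ2 by ring,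
          ← hlabs]
      exact h
    · -- the genuine reduction step
      have hk1 : kap1 ≠ 0 := fun h => hk (by rw [h, labs_zero, zero_mul]; exact labs_nonneg _)
      have hk2 : kap2 ≠ 0 := fun h => hk (by rw [h, labs_zero, mul_zero]; exact labs_nonneg _)
      have hl1 : lam1 ≠ 0 := fun h => hl (by rw [h, labs_zero, zero_mul]; exact labs_nonneg _)
      have hl2 : lam2 ≠ 0 := fun h => hl (by rw [h, labs_zero, mul_zero]; exact labs_nonneg _)
      have hoK : kap1.order + kap2.order < (lam1 * kap2 - lam2 * kap1).order := by
        by_contra hcon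
        push_neg at hcon
        exact hk (by rw [← labs_mul]
                     exact labs_le_labs hd (by rwa [HahnSeries.order_mul hk1 hk2]))
      have hoL : lam1.order + lam2.order < (lam1 * kap2 - lam2 * kap1).order := by
        by_contra hcon
        push_neg at hcon
        exact hl (by rw [← labs_mul]
                     exact labs_le_labs hd (by rwa [HahnSeries.order_mul hl1 hl2]))
      have heq : lam1.order + kap2.order = lam2.order + kap1.order := by
        by_contra hne
        have hx : lam1 * kap2 ≠ 0 := mul_ne_zero hl1 hk2
        have hy : lam2 * kap1 ≠ 0 := mul_ne_zero hl2 hk1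
        have hne' : (lam1 * kap2).order ≠ (lam2 * kap1).order := by
          rw [HahnSeries.order_mul hl1 hk2, HahnSeries.order_mul hl2 hk1]; exact hne
        have hmin := order_sub_eq_min hx hy hne'
        rw [HahnSeries.order_mul hl1 hk2, HahnSeries.order_mul hl2 hk1] at hmin
        omega
      by_cases hcase : kap1.order ≤ lam1.order
      · -- reduce the kappa column by the lambda column
        obtain ⟨A, hA⟩ := exists_round (kap1 / lam1)
        have hdeps : lam1 * kap2 - lam2 * kap1 = lam1 * lam2 * (kap2 / lam2 - kap1 / lam1) := by
          field_simp
          try ring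
        have hepsne : kap2 / lam2 - kap1 / lam1 ≠ 0 := by
          intro h; rw [h, mul_zero] at hdeps; exact hd hdeps
        have hordeps : (lam1 * kap2 - lam2 * kap1).order
            = lam1.order + lam2.order + (kap2 / lam2 - kap1 / lam1).order := by
          rw [hdeps, HahnSeries.order_mul (mul_ne_zero hl1 hl2) hepsne,
            HahnSeries.order_mul hl1 hl2]
        have e1' : kap1 - polyToL Fq A * lam1 = lam1 * (kap1 / lam1 - polyToL Fq A) := by
          field_simp
          try ring
        have e2' : kap2 - polyToL Fq A * lam2
            = lam2 * ((kap1 / lam1 - polyToL Fq A) + (kap2 / lam2 - kap1 / lam1)) := by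
          field_simp
          try ring
        have hw2 : (kap1 / lam1 - polyToL Fq A) + (kap2 / lam2 - kap1 / lam1) = 0
            ∨ 1 ≤ ((kap1 / lam1 - polyToL Fq A) + (kap2 / lam2 - kap1 / lam1)).order := by
          rcases hA with h | h
          · rw [h, zero_add]; right; omega
          · by_cases h0 : (kap1 / lam1 - polyToL Fq A) + (kap2 / lam2 - kap1 / lam1) = 0
            · exact Or.inl h0
            · right
              have := HahnSeries.min_order_le_order_add h0
              omega
        have detid : lam1 * (kap2 - polyToL Fq A * lam2) - lam2 * (kap1 - polyToL Fq A * lam1)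
            = lam1 * kap2 - lam2 * kap1 := by ring
        have hnew : ∃ Q1 Q2 : Polynomial Fq,
            labs Fq (lam1 * polyToL Fq Q1 + (kap1 - polyToL Fq A * lam1) * polyToL Fq Q2 + ρ1) *
              labs Fq (lam2 * polyToL Fq Q1 + (kap2 - polyToL Fq A * lam2) * polyToL Fq Q2 + ρ2) ≤
              labs Fq (lam1 * (kap2 - polyToL Fq A * lam2)
                - lam2 * (kap1 - polyToL Fq A * lam1)) / (Fintype.card Fq : ℝ) ^ 2 := by
          by_cases hk' : labs Fq (kap1 - polyToL Fq A * lam1) * labs Fq (kap2 - polyToL Fq A * lam2)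
              ≤ labs Fq (lam1 * (kap2 - polyToL Fq A * lam2) - lam2 * (kap1 - polyToL Fq A * lam1))
          · exact lemE _ _ _ _ _ _ (by rw [detid]; exact hd) hk'
          · have hk1' : kap1 - polyToL Fq A * lam1 ≠ 0 :=
              fun h => hk' (by rw [h, labs_zero, zero_mul]; exact labs_nonneg _)
            have hk2' : kap2 - polyToL Fq A * lam2 ≠ 0 :=
              fun h => hk' (by rw [h, labs_zero, mul_zero]; exact labs_nonneg _)
            have hwne1 : kap1 / lam1 - polyToL Fq A ≠ 0 := by
              intro h; apply hk1'; rw [e1', h, mul_zero]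
            have hwne2 : (kap1 / lam1 - polyToL Fq A) + (kap2 / lam2 - kap1 / lam1) ≠ 0 := by
              intro h; apply hk2'; rw [e2', h, mul_zero]
            have hA1 : 1 ≤ (kap1 / lam1 - polyToL Fq A).order := hA.resolve_left hwne1
            have hA2 : 1 ≤ ((kap1 / lam1 - polyToL Fq A) + (kap2 / lam2 - kap1 / lam1)).order :=
              hw2.resolve_left hwne2
            have ho1 : lam1.order + 1 ≤ (kap1 - polyToL Fq A * lam1).order := by
              rw [e1', HahnSeries.order_mul hl1 hwne1]; omega
            have ho2 : lam2.order + 1 ≤ (kap2 - polyToL Fq A * lam2).order := by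
              rw [e2', HahnSeries.order_mul hl2 hwne2]; omega
            refine ih lam1 (kap1 - polyToL Fq A * lam1) lam2 (kap2 - polyToL Fq A * lam2) ρ1 ρ2
              (by rw [detid]; exact hd) ?_
            rw [detid]
            omega
        obtain ⟨R1, R2, hR⟩ := hnew
        refine ⟨R1 - A * R2, R2, ?_⟩
        have t1 : lam1 * polyToL Fq (R1 - A * R2) + kap1 * polyToL Fq R2 + ρ1
            = lam1 * polyToL Fq R1 + (kap1 - polyToL Fq A * lam1) * polyToL Fq R2 + ρ1 := by
          rw [polyToL_sub, polyToL_mul]; ring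
        have t2 : lam2 * polyToL Fq (R1 - A * R2) + kap2 * polyToL Fq R2 + ρ2
            = lam2 * polyToL Fq R1 + (kap2 - polyToL Fq A * lam2) * polyToL Fq R2 + ρ2 := by
          rw [polyToL_sub, polyToL_mul]; ring
        rw [t1, t2, ← detid]
        exact hR
      · -- reduce the lambda column by the kappa column
        push_neg at hcase
        obtain ⟨B, hB⟩ := exists_round (lam1 / kap1)
        have hdeps : kap1 * lam2 - kap2 * lam1 = kap1 * kap2 * (lam2 / kap2 - lam1 / kap1) := by
          field_simp
          try ring
        have hdiff : kap1 * lam2 - kap2 * lam1 = -(lam1 * kap2 - lam2 * kap1) := by ring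
        have hd2 : kap1 * lam2 - kap2 * lam1 ≠ 0 := by
          rw [hdiff]; exact neg_ne_zero.mpr hd
        have hepsne : lam2 / kap2 - lam1 / kap1 ≠ 0 := by
          intro h; rw [h, mul_zero] at hdeps; exact hd2 hdeps
        have hordeps : (lam1 * kap2 - lam2 * kap1).order
            = kap1.order + kap2.order + (lam2 / kap2 - lam1 / kap1).order := by
          have : (lam1 * kap2 - lam2 * kap1).order = (kap1 * lam2 - kap2 * lam1).order := by
            rw [hdiff, HahnSeries.order_neg]
          rw [this, hdeps, HahnSeries.order_mul (mul_ne_zero hk1 hk2) hepsne,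
            HahnSeries.order_mul hk1 hk2]
        have e1' : lam1 - polyToL Fq B * kap1 = kap1 * (lam1 / kap1 - polyToL Fq B) := by
          field_simp
          try ring
        have e2' : lam2 - polyToL Fq B * kap2
            = kap2 * ((lam1 / kap1 - polyToL Fq B) + (lam2 / kap2 - lam1 / kap1)) := by
          field_simp
          try ring
        have hw2 : (lam1 / kap1 - polyToL Fq B) + (lam2 / kap2 - lam1 / kap1) = 0
            ∨ 1 ≤ ((lam1 / kap1 - polyToL Fq B) + (lam2 / kap2 - lam1 / kap1)).order := by
          rcases hB with h | h
          · rw [h, zero_add]; right; omega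
          · by_cases h0 : (lam1 / kap1 - polyToL Fq B) + (lam2 / kap2 - lam1 / kap1) = 0
            · exact Or.inl h0
            · right
              have := HahnSeries.min_order_le_order_add h0
              omega
        have detid : kap1 * (lam2 - polyToL Fq B * kap2) - kap2 * (lam1 - polyToL Fq B * kap1)
            = kap1 * lam2 - kap2 * lam1 := by ring
        have hnew : ∃ Q1 Q2 : Polynomial Fq,
            labs Fq (kap1 * polyToL Fq Q1 + (lam1 - polyToL Fq B * kap1) * polyToL Fq Q2 + ρ1) *
              labs Fq (kap2 * polyToL Fq Q1 + (lam2 - polyToL Fq B * kap2) * polyToL Fq Q2 + ρ2) ≤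
              labs Fq (kap1 * (lam2 - polyToL Fq B * kap2)
                - kap2 * (lam1 - polyToL Fq B * kap1)) / (Fintype.card Fq : ℝ) ^ 2 := by
          by_cases hk' : labs Fq (lam1 - polyToL Fq B * kap1) * labs Fq (lam2 - polyToL Fq B * kap2)
              ≤ labs Fq (kap1 * (lam2 - polyToL Fq B * kap2) - kap2 * (lam1 - polyToL Fq B * kap1))
          · exact lemE _ _ _ _ _ _ (by rw [detid]; exact hd2) hk'
          · have hl1' : lam1 - polyToL Fq B * kap1 ≠ 0 :=
              fun h => hk' (by rw [h, labs_zero, zero_mul]; exact labs_nonneg _)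
            have hl2' : lam2 - polyToL Fq B * kap2 ≠ 0 :=
              fun h => hk' (by rw [h, labs_zero, mul_zero]; exact labs_nonneg _)
            have hwne1 : lam1 / kap1 - polyToL Fq B ≠ 0 := by
              intro h; apply hl1'; rw [e1', h, mul_zero]
            have hwne2 : (lam1 / kap1 - polyToL Fq B) + (lam2 / kap2 - lam1 / kap1) ≠ 0 := by
              intro h; apply hl2'; rw [e2', h, mul_zero]
            have hB1 : 1 ≤ (lam1 / kap1 - polyToL Fq B).order := hB.resolve_left hwne1
            have hB2 : 1 ≤ ((lam1 / kap1 - polyToL Fq B) + (lam2 / kap2 - lam1 / kap1)).order :=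
              hw2.resolve_left hwne2
            have ho1 : kap1.order + 1 ≤ (lam1 - polyToL Fq B * kap1).order := by
              rw [e1', HahnSeries.order_mul hk1 hwne1]; omega
            have ho2 : kap2.order + 1 ≤ (lam2 - polyToL Fq B * kap2).order := by
              rw [e2', HahnSeries.order_mul hk2 hwne2]; omega
            refine ih kap1 (lam1 - polyToL Fq B * kap1) kap2 (lam2 - polyToL Fq B * kap2) ρ1 ρ2
              (by rw [detid]; exact hd2) ?_
            rw [detid]
            have hordneg : (kap1 * lam2 - kap2 * lam1).order
                = (lam1 * kap2 - lam2 * kap1).order := by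
              rw [hdiff, HahnSeries.order_neg]
            omega
        obtain ⟨R1, R2, hR⟩ := hnew
        refine ⟨R2, R1 - B * R2, ?_⟩
        have t1 : lam1 * polyToL Fq R2 + kap1 * polyToL Fq (R1 - B * R2) + ρ1
            = kap1 * polyToL Fq R1 + (lam1 - polyToL Fq B * kap1) * polyToL Fq R2 + ρ1 := by
          rw [polyToL_sub, polyToL_mul]; ring
        have t2 : lam2 * polyToL Fq R2 + kap2 * polyToL Fq (R1 - B * R2) + ρ2
            = kap2 * polyToL Fq R1 + (lam2 - polyToL Fq B * kap2) * polyToL Fq R2 + ρ2 := by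
          rw [polyToL_sub, polyToL_mul]; ring
        have hlabseq : labs Fq (kap1 * (lam2 - polyToL Fq B * kap2)
              - kap2 * (lam1 - polyToL Fq B * kap1)) = labs Fq (lam1 * kap2 - lam2 * kap1) := by
          rw [detid, hdiff, labs_neg]
        rw [t1, t2, ← hlabseq]
        exact hR

end MinkowskiAux

variable (Fq)

/-- **Minkowski's theorem on products of two inhomogeneous linear forms.**
If `Δ = |λ₁κ₂ − λ₂κ₁| > 0` then for all `ρ₁, ρ₂` there is `Q ∈ 𝔽_q[T]²` with
`|L₁(Q) + ρ₁|·|L₂(Q) + ρ₂| ≤ q⁻² Δ`. -/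
theorem stmt8 (lam1 kap1 lam2 kap2 : LaurentSeries Fq)
    (hΔ : 0 < labs Fq (lam1 * kap2 - lam2 * kap1))
    (ρ1 ρ2 : LaurentSeries Fq) :
    ∃ Q1 Q2 : Polynomial Fq,
      labs Fq (lam1 * polyToL Fq Q1 + kap1 * polyToL Fq Q2 + ρ1) *
        labs Fq (lam2 * polyToL Fq Q1 + kap2 * polyToL Fq Q2 + ρ2) ≤
        labs Fq (lam1 * kap2 - lam2 * kap1) / (Fintype.card Fq : ℝ) ^ 2 := by
  have hd : lam1 * kap2 - lam2 * kap1 ≠ 0 := by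
    intro h
    rw [h, labs_zero] at hΔ
    exact lt_irrefl _ hΔ
  exact main_induction _ lam1 kap1 lam2 kap2 ρ1 ρ2 hd (le_refl _)

end
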